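/- Fix μ ∈ ℝ, c ∈ (0,1), and let s > 0 be such that N(μ,1)({y : |y − μ| ≥ s}) = c. Then for every measurable set S ⊆ ℝ with N(μ,1)(S) = c, the truncated second moment satisfies E_{y ~ N(μ,1,S)}[(y − μ)²] ≤ E_{y ~ N(μ,1,S₀)}[(y − μ)²], where S₀ = {y : |y − μ| ≥ s}; i.e., among all truncation sets of a given Gaussian mass, the symmetric two-sided tail set maximizes the second moment about the mean. -/

import Mathlib

open MeasureTheory ProbabilityTheory Real
open scoped RealInnerProductSpace ENNReal

/-- The survival probability `α(μ; S) = N(μ,1)(S)`. -/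
noncomputable def survival (μ : ℝ) (S : Set ℝ) : ℝ :=
  (gaussianReal μ 1 S).toReal

/-- The truncated Gaussian `N(μ,1,S)`, i.e. `N(μ,1)` conditioned on `S`. -/
noncomputable def truncGaussian (μ : ℝ) (S : Set ℝ) : Measure ℝ :=
  (gaussianReal μ 1)[|S]

lemma integrable_sq_gaussian (μ : ℝ) :
    Integrable (fun y : ℝ => (y - μ) ^ 2) (gaussianReal μ 1) := by
  rw [gaussianReal_of_var_ne_zero _ one_ne_zero,
    integrable_withDensity_iff (measurable_gaussianPDF _ _)
      (ae_of_all _ fun x => ENNReal.ofReal_lt_top)]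
  have h1 : Integrable (fun x : ℝ =>
      (√(2 * π))⁻¹ * (x ^ (2:ℝ) * rexp (-(1/2) * x ^ 2))) volume :=
    (integrable_rpow_mul_exp_neg_mul_sq (b := 1/2) (by norm_num)
      (s := (2:ℝ)) (by norm_num)).const_mul _
  have h2 := h1.comp_sub_right μ
  refine h2.congr (ae_of_all _ fun x => ?_)
  have hr : (x - μ) ^ (2:ℝ) = (x - μ) ^ 2 := by
    rw [show ((2:ℝ)) = ((2:ℕ):ℝ) by norm_num, Real.rpow_natCast]
  have hx : (√(2*π))⁻¹ * ((x-μ)^(2:ℝ) * rexp (-(1/2)*(x-μ)^2))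
      = (x-μ)^2 * gaussianPDFReal μ 1 x := by
    rw [hr, gaussianPDFReal]
    push_cast
    rw [mul_one, show -(x-μ)^2/(2*1) = -(1/2)*(x-μ)^2 by ring]
    ring
  beta_reduce
  rw [show gaussianPDF μ 1 x = ENNReal.ofReal (gaussianPDFReal μ 1 x) from rfl, ENNReal.toReal_ofReal (gaussianPDFReal_nonneg _ _ _), ← hx]

lemma key_ineq (μ c s : ℝ) (hc0 : 0 < c) (hs : 0 < s)
    (htail : (gaussianReal μ 1 {y : ℝ | s ≤ |y - μ|}).toReal = c)
    (S : Set ℝ) (hS : MeasurableSet S)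
    (hSmass : (gaussianReal μ 1 S).toReal = c) :
    ∫ y in S, (y - μ) ^ 2 ∂(gaussianReal μ 1) ≤
      ∫ y in {y : ℝ | s ≤ |y - μ|}, (y - μ) ^ 2 ∂(gaussianReal μ 1) := by
  set N := gaussianReal μ 1 with hN
  set T : Set ℝ := {y : ℝ | s ≤ |y - μ|} with hTdef
  have hT : MeasurableSet T :=
    measurableSet_le measurable_const ((measurable_id.sub_const μ).abs)
  have hg := integrable_sq_gaussian μ
  have hfin : ∀ A : Set ℝ, N A ≠ ∞ := fun A => measure_ne_top N A
  have hST : N (S ∩ T) + N (S \ T) = N S := measure_inter_add_diff S hT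
  have hTS : N (T ∩ S) + N (T \ S) = N T := measure_inter_add_diff T hS
  have hmass : (N (S \ T)).toReal = (N (T \ S)).toReal := by
    have h1 : (N (S ∩ T)).toReal + (N (S \ T)).toReal = c := by
      rw [← ENNReal.toReal_add (hfin _) (hfin _), hST, hSmass]
    have h2 : (N (S ∩ T)).toReal + (N (T \ S)).toReal = c := by
      rw [Set.inter_comm, ← ENNReal.toReal_add (hfin _) (hfin _), hTS, htail]
    linarith
  have hsplit : ∀ A B : Set ℝ, MeasurableSet A → MeasurableSet B →
      ∫ y in A, (y - μ) ^ 2 ∂N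
        = ∫ y in A ∩ B, (y - μ) ^ 2 ∂N + ∫ y in A \ B, (y - μ) ^ 2 ∂N := by
    intro A B hA hB
    have hdisj : Disjoint (A ∩ B) (A \ B) :=
      Set.disjoint_left.mpr fun x hx hx2 => hx2.2 hx.2
    conv_lhs => rw [← Set.inter_union_diff A B]
    exact setIntegral_union hdisj (hA.diff hB) hg.integrableOn hg.integrableOn
  rw [hsplit S T hS hT, hsplit T S hT hS, Set.inter_comm T S]
  refine add_le_add le_rfl ?_
  calc ∫ y in S \ T, (y - μ) ^ 2 ∂N
      ≤ ∫ _ in S \ T, s ^ 2 ∂N := by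
        refine setIntegral_mono_on hg.integrableOn
          (integrableOn_const (measure_ne_top _ _)) (hS.diff hT) ?_
        intro x hx
        have hlt : |x - μ| < s := not_le.mp hx.2
        have := pow_le_pow_left₀ (abs_nonneg (x - μ)) hlt.le 2
        rwa [sq_abs] at this
    _ = s ^ 2 * (N (T \ S)).toReal := by
        rw [setIntegral_const, measureReal_def, hmass, smul_eq_mul, mul_comm]
    _ = ∫ _ in T \ S, s ^ 2 ∂N := by rw [setIntegral_const, measureReal_def, smul_eq_mul, mul_comm]
    _ ≤ ∫ y in T \ S, (y - μ) ^ 2 ∂N := by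
        refine setIntegral_mono_on
          (integrableOn_const (measure_ne_top _ _)) hg.integrableOn
          (hT.diff hS) ?_
        intro x hx
        have hle : s ≤ |x - μ| := hx.1
        have := pow_le_pow_left₀ hs.le hle 2
        rwa [sq_abs] at this

theorem stmt17 (μ c s : ℝ) (hc0 : 0 < c) (hc1 : c < 1) (hs : 0 < s)
    (htail : (gaussianReal μ 1 {y : ℝ | s ≤ |y - μ|}).toReal = c)
    (S : Set ℝ) (hS : MeasurableSet S)
    (hSmass : (gaussianReal μ 1 S).toReal = c) :
    ∫ y, (y - μ) ^ 2 ∂(truncGaussian μ S) ≤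
      ∫ y, (y - μ) ^ 2 ∂(truncGaussian μ {y : ℝ | s ≤ |y - μ|}) := by
  rw [truncGaussian, truncGaussian, ProbabilityTheory.cond, ProbabilityTheory.cond,
    integral_smul_measure, integral_smul_measure, smul_eq_mul, smul_eq_mul,
    ENNReal.toReal_inv, ENNReal.toReal_inv, hSmass, htail]
  exact mul_le_mul_of_nonneg_left
    (key_ineq μ c s hc0 hs htail S hS hSmass) (inv_nonneg.mpr hc0.le)
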